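/- Let φ : ℝⁿ → ℝᵖ be a C^k map with k ≥ max(n − p + 1, 1). Then every Lipschitz trivial value of φ is a regular value of φ. -/

import Mathlib

/-- `c` is a Lipschitz trivial value of `f`: there is a neighbourhood `V` of `c` and a
bi-Lipschitz homeomorphism `H : f⁻¹(c) × V ≃ f⁻¹(V)` (outer metrics, product metric)
with `f ∘ H = projection onto V`. -/
def LipTrivAt {E F : Type*} [MetricSpace E] [MetricSpace F] (f : E → F) (c : F) : Prop :=
  ∃ V : Set F, IsOpen V ∧ c ∈ V ∧
    ∃ (H : ↥(f ⁻¹' {c}) × ↥V ≃ ↥(f ⁻¹' V)) (K K' : NNReal),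
      LipschitzWith K H ∧ LipschitzWith K' H.symm ∧
      ∀ z : ↥(f ⁻¹' {c}) × ↥V, f (H z : E) = (z.2 : F)

theorem stmt_5 {n p : ℕ} (k : ℕ) (hk : max (n - p + 1) 1 ≤ k)
    (φ : EuclideanSpace ℝ (Fin n) → EuclideanSpace ℝ (Fin p))
    (hφ : ContDiff ℝ k φ)
    (c : EuclideanSpace ℝ (Fin p)) (hc : LipTrivAt φ c) :
    ∀ x, φ x = c → Function.Surjective (fderiv ℝ φ x) := by
  classical
  obtain ⟨V, hVopen, hcV, H, K, K', lipH, lipH', hfib⟩ := hc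
  intro x hx
  have hxV : x ∈ φ ⁻¹' V := by simp [Set.mem_preimage, hx, hcV]
  set z : ↥(φ ⁻¹' {c}) × ↥V := H.symm ⟨x, hxV⟩ with hz
  have hHz : ((H z : ↥(φ ⁻¹' V)) : EuclideanSpace ℝ (Fin n)) = x := by
    rw [hz, Equiv.apply_symm_apply]
  have hz2 : (z.2 : EuclideanSpace ℝ (Fin p)) = c := by
    have h1 := hfib z
    rw [hHz, hx] at h1
    exact h1.symm
  -- the Lipschitz section through x
  set g : EuclideanSpace ℝ (Fin p) → EuclideanSpace ℝ (Fin n) :=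
    fun t => if h : t ∈ V then ((H (z.1, ⟨t, h⟩) : ↥(φ ⁻¹' V)) : EuclideanSpace ℝ (Fin n)) else x
    with hg
  have hgmem : ∀ t (h : t ∈ V), g t = ((H (z.1, ⟨t, h⟩) : ↥(φ ⁻¹' V)) : EuclideanSpace ℝ (Fin n)) := by
    intro t h
    simp only [hg, dif_pos h]
  have hgc : g c = x := by
    rw [hgmem c hcV]
    have hzz : (z.1, (⟨c, hcV⟩ : ↥V)) = z := by
      refine Prod.ext rfl ?_
      exact (Subtype.ext hz2).symm
    rw [hzz, hHz]
  have hφg : ∀ t, t ∈ V → φ (g t) = t := by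
    intro t h
    rw [hgmem t h]
    exact hfib (z.1, ⟨t, h⟩)
  have hglip : ∀ t, t ∈ V → dist (g t) x ≤ K * dist t c := by
    intro t h
    rw [hgmem t h, ← hHz]
    have h1 := lipH.dist_le_mul (z.1, ⟨t, h⟩) z
    refine le_trans ?_ (le_trans h1 ?_)
    · rw [Subtype.dist_eq]
    · gcongr
      rw [Prod.dist_eq]
      have hd1 : dist (z.1, (⟨t, h⟩ : ↥V)).1 z.1 = 0 := by simp
      have hd2 : dist ((⟨t, h⟩ : ↥V)) z.2 = dist t c := by
        rw [Subtype.dist_eq, hz2]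
      rw [hd2]
      simp [hd1, dist_nonneg]
  -- differentiability of φ at x
  have hk1 : (1 : ℕ) ≤ k := le_trans (le_max_right _ _) hk
  have hdiff : HasFDerivAt φ (fderiv ℝ φ x) x :=
    ((hφ.differentiable (by exact_mod_cast Nat.one_le_iff_ne_zero.mp hk1)) x).hasFDerivAt
  set A := fderiv ℝ φ x with hA
  -- reduce surjectivity to triviality of the orthogonal complement of the range
  change Function.Surjective (A : EuclideanSpace ℝ (Fin n) →ₗ[ℝ] EuclideanSpace ℝ (Fin p))
  rw [← LinearMap.range_eq_top]
  rw [← Submodule.orthogonal_eq_bot_iff]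
  rw [Submodule.eq_bot_iff]
  intro v hv
  by_contra hv0
  have hvpos : 0 < ‖v‖ := norm_pos_iff.mpr hv0
  rw [Submodule.mem_orthogonal] at hv
  -- the curve s ↦ g (c + s • v)
  have htV : Filter.Tendsto (fun s : ℝ => c + s • v) (nhds 0) (nhds c) := by
    have : Filter.Tendsto (fun s : ℝ => c + s • v) (nhds 0) (nhds (c + (0:ℝ) • v)) := by
      apply Filter.Tendsto.const_add
      exact (Filter.tendsto_id.smul_const v)
    simpa using this
  have hev : ∀ᶠ s : ℝ in nhds 0, c + s • v ∈ V := htV.eventually (hVopen.eventually_mem hcV)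
  have hdistb : ∀ᶠ s : ℝ in nhds 0, dist (g (c + s • v)) x ≤ (K * ‖v‖) * |s| := by
    filter_upwards [hev] with s hs
    calc dist (g (c + s • v)) x ≤ K * dist (c + s • v) c := hglip _ hs
      _ = K * (‖v‖ * |s|) := by
          rw [dist_eq_norm]
          simp [norm_smul, mul_comm]
      _ = (K * ‖v‖) * |s| := by ring
  have hgt : Filter.Tendsto (fun s : ℝ => g (c + s • v)) (nhds 0) (nhds x) := by
    rw [tendsto_iff_dist_tendsto_zero]
    refine squeeze_zero' (Filter.Eventually.of_forall fun s => dist_nonneg) hdistb ?_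
    have h2 : Filter.Tendsto (fun s : ℝ => (K * ‖v‖) * |s|) (nhds 0)
        (nhds ((K * ‖v‖) * |(0:ℝ)|)) :=
      (continuous_abs.tendsto (0:ℝ)).const_mul _
    simpa using h2
  -- little-o estimate
  have hlo := hdiff.isLittleO.comp_tendsto hgt
  have hbig : (fun s : ℝ => g (c + s • v) - x) =O[nhds 0] (fun s : ℝ => s) := by
    apply Asymptotics.IsBigO.of_bound (K * ‖v‖)
    filter_upwards [hev] with s hs
    rw [← dist_eq_norm]
    calc dist (g (c + s • v)) x ≤ K * dist (c + s • v) c := hglip _ hs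
      _ = K * (‖v‖ * |s|) := by
          rw [dist_eq_norm]; simp [norm_smul, mul_comm]
      _ = (K * ‖v‖) * ‖s‖ := by rw [Real.norm_eq_abs]; ring
  have hlo2 : (fun s : ℝ => φ (g (c + s • v)) - φ x - A (g (c + s • v) - x)) =o[nhds 0]
      (fun s : ℝ => s) := hlo.trans_isBigO hbig
  have hsmall := hlo2.def (by positivity : (0:ℝ) < ‖v‖ / 2)
  have key : ∀ᶠ s : ℝ in nhds 0, |s| * ‖v‖ ^ 2 ≤ ‖v‖ / 2 * |s| * ‖v‖ := by
    filter_upwards [hev, hsmall] with s hs hsm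
    have hφgs : φ (g (c + s • v)) = c + s • v := hφg _ hs
    have hinner : inner ℝ (φ (g (c + s • v)) - φ x - A (g (c + s • v) - x)) v = s * ‖v‖ ^ 2 := by
      rw [hφgs, hx]
      have hrange : inner ℝ (A (g (c + s • v) - x)) v = (0:ℝ) :=
        hv _ ⟨g (c + s • v) - x, rfl⟩
      rw [inner_sub_left, inner_sub_left, hrange, inner_add_left, real_inner_smul_left,
        real_inner_self_eq_norm_sq]
      ring
    have habs : |s * ‖v‖ ^ 2| ≤ ‖φ (g (c + s • v)) - φ x - A (g (c + s • v) - x)‖ * ‖v‖ := by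
      rw [← hinner]
      exact abs_real_inner_le_norm _ _
    rw [abs_mul, abs_of_nonneg (by positivity : (0:ℝ) ≤ ‖v‖ ^ 2)] at habs
    refine le_trans habs ?_
    gcongr
    simpa [Real.norm_eq_abs] using hsm
  -- pick a nonzero s in the eventual set
  have key' : ∀ᶠ s : ℝ in nhdsWithin 0 {(0:ℝ)}ᶜ, |s| * ‖v‖ ^ 2 ≤ ‖v‖ / 2 * |s| * ‖v‖ :=
    key.filter_mono nhdsWithin_le_nhds
  obtain ⟨s, hsle, hs0⟩ := (key'.and self_mem_nhdsWithin).exists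
  have hspos : 0 < |s| := abs_pos.mpr hs0
  have hpos2 : 0 < |s| * ‖v‖ * ‖v‖ := mul_pos (mul_pos hspos hvpos) hvpos
  rw [pow_two] at hsle
  linarith [hsle, hpos2]
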